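/- (Jacobi identity from second-order gauge invariance.) Let r be a positive integer and f : Fin r → Fin r → Fin r → ℝ be completely antisymmetric (antisymmetric under the interchange of any two of its three arguments). Then the following are equivalent: (1) for all a, b, d, e, ∑_{c} (2·f c a d · f c b e − f c a b · f c d e) = ∑_{c} (2·f c b d · f c a e − f c b a · f c d e) (i.e. the expression 2 f_{cad} f_{cbe} − f_{cab} f_{cde}, summed over c, is symmetric under a ↔ b); (2) the Jacobi identities hold: for all a, b, d, e, ∑_{c} (f a b c · f d e c + f b d c · f a e c + f d a c · f b e c) = 0. -/
import Mathlib

/-- Jacobi identity from second-order gauge invariance: for completely antisymmetric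
real constants `f_{abc}`, the symmetry of `∑_c (2 f_{cad} f_{cbe} − f_{cab} f_{cde})`
under `a ↔ b` is equivalent to the Jacobi identities
`∑_c (f_{abc} f_{dec} + f_{bdc} f_{aec} + f_{dac} f_{bec}) = 0`. -/
theorem gauge_invariance_iff_jacobi
    (r : ℕ) (hr : 0 < r) (f : Fin r → Fin r → Fin r → ℝ)
    (hanti1 : ∀ a b c, f a b c = - f b a c)
    (hanti2 : ∀ a b c, f a b c = - f a c b) :
    (∀ a b d e : Fin r,
        ∑ c, (2 * f c a d * f c b e - f c a b * f c d e)
          = ∑ c, (2 * f c b d * f c a e - f c b a * f c d e)) ↔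
      (∀ a b d e : Fin r,
        ∑ c, (f a b c * f d e c + f b d c * f a e c + f d a c * f b e c) = 0) := by
  have cyc : ∀ a b c, f a b c = f c a b := by
    intro a b c
    rw [hanti2 a b c, hanti1 a c b]
    ring
  have key : ∀ a b d e : Fin r,
      ∑ c, (f a b c * f d e c + f b d c * f a e c + f d a c * f b e c)
        = (-(1:ℝ)/2) * ((∑ c, (2 * f c a d * f c b e - f c a b * f c d e))
            - ∑ c, (2 * f c b d * f c a e - f c b a * f c d e)) := by
    intro a b d e
    rw [← Finset.sum_sub_distrib, Finset.mul_sum]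
    apply Finset.sum_congr rfl
    intro c _
    rw [← cyc a d c, ← cyc b e c, ← cyc a b c, ← cyc d e c, ← cyc b d c, ← cyc a e c,
      hanti1 d a c, hanti2 c b a, ← cyc a b c]
    ring
  constructor
  · intro h a b d e
    rw [key a b d e, h a b d e, sub_self, mul_zero]
  · intro h a b d e
    have k := key a b d e
    rw [h a b d e] at k
    have := k.symm
    nlinarith [this]
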